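/- For all integers n, m with |n| ≥ 3 and |m| ≥ 3, and all z, w in the closure of D (the closed square with vertices 0, 1+i, 2, 1-i), one has |(z + 2n)² + (w̄ + 2m)²| ≥ 4(n² + m² - 2|n| - 2|m| - 2) ≥ 16. -/

import Mathlib

open Complex

/-- The open square `D` with vertices `0, 1+i, 2, 1-i`, viewed in `ℂ`. -/
def Dsq : Set ℂ := {z : ℂ | |z.im| < z.re ∧ |z.im| < 2 - z.re}

lemma closure_Dsq_sub : closure Dsq ⊆ {z : ℂ | |z.im| ≤ z.re ∧ |z.im| ≤ 2 - z.re} := by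
  apply closure_minimal
  · intro z hz
    exact ⟨hz.1.le, hz.2.le⟩
  · exact IsClosed.inter
      (isClosed_le (continuous_abs.comp Complex.continuous_im) Complex.continuous_re)
      (isClosed_le (continuous_abs.comp Complex.continuous_im)
        (continuous_const.sub Complex.continuous_re))

lemma sq_bound (a N : ℝ) (h0 : 0 ≤ a) (h2 : a ≤ 2) (hN : 3 ≤ |N|) :
    4 * N ^ 2 - 8 * |N| + 4 ≤ (a + 2 * N) ^ 2 := by
  rcases abs_cases N with ⟨h1, _⟩ | ⟨h1, _⟩ <;> nlinarith [sq_nonneg (a + 2 * N)]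

/-- For `|n|, |m| ≥ 3` and `z, w ∈ cl(D)`:
`|(z+2n)² + (w̄+2m)²| ≥ 4(n² + m² - 2|n| - 2|m| - 2) ≥ 16`. -/
theorem modulus_lower_bound (n m : ℤ) (hn : 3 ≤ |n|) (hm : 3 ≤ |m|)
    (z w : ℂ) (hz : z ∈ closure Dsq) (hw : w ∈ closure Dsq) :
    4 * ((n : ℝ) ^ 2 + (m : ℝ) ^ 2 - 2 * |(n : ℝ)| - 2 * |(m : ℝ)| - 2) ≤
      ‖(z + 2 * (n : ℂ)) ^ 2 + ((starRingEnd ℂ) w + 2 * (m : ℂ)) ^ 2‖ ∧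
    (16 : ℝ) ≤ 4 * ((n : ℝ) ^ 2 + (m : ℝ) ^ 2 - 2 * |(n : ℝ)| - 2 * |(m : ℝ)| - 2) := by
  have hn' : (3 : ℝ) ≤ |(n : ℝ)| := by
    rw [← Int.cast_abs]; exact_mod_cast hn
  have hm' : (3 : ℝ) ≤ |(m : ℝ)| := by
    rw [← Int.cast_abs]; exact_mod_cast hm
  obtain ⟨hz1, hz2⟩ := closure_Dsq_sub hz
  obtain ⟨hw1, hw2⟩ := closure_Dsq_sub hw
  have hza : 0 ≤ z.re := le_trans (abs_nonneg _) hz1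
  have hzb : z.re ≤ 2 := by linarith [abs_nonneg z.im]
  have hzi : z.im ^ 2 ≤ 1 := by
    have : |z.im| ≤ 1 := by linarith
    nlinarith [abs_nonneg z.im, _root_.sq_abs z.im]
  have hwa : 0 ≤ w.re := le_trans (abs_nonneg _) hw1
  have hwb : w.re ≤ 2 := by linarith [abs_nonneg w.im]
  have hwi : w.im ^ 2 ≤ 1 := by
    have : |w.im| ≤ 1 := by linarith
    nlinarith [abs_nonneg w.im, _root_.sq_abs w.im]
  have hb1 := sq_bound z.re (n : ℝ) hza hzb hn'
  have hb2 := sq_bound w.re (m : ℝ) hwa hwb hm'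
  constructor
  · have hre : ((z + 2 * (n : ℂ)) ^ 2 + ((starRingEnd ℂ) w + 2 * (m : ℂ)) ^ 2).re
        = (z.re + 2 * (n : ℝ)) ^ 2 - z.im ^ 2
          + ((w.re + 2 * (m : ℝ)) ^ 2 - w.im ^ 2) := by
      simp [pow_two, Complex.add_re, Complex.add_im, Complex.mul_re, Complex.mul_im,
        Complex.conj_re, Complex.conj_im]
    calc 4 * ((n : ℝ) ^ 2 + (m : ℝ) ^ 2 - 2 * |(n : ℝ)| - 2 * |(m : ℝ)| - 2)
        ≤ ((z + 2 * (n : ℂ)) ^ 2 + ((starRingEnd ℂ) w + 2 * (m : ℂ)) ^ 2).re := by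
          rw [hre]; nlinarith
      _ ≤ ‖(z + 2 * (n : ℂ)) ^ 2 + ((starRingEnd ℂ) w + 2 * (m : ℂ)) ^ 2‖ := by
          exact Complex.re_le_norm _
  · nlinarith [_root_.sq_abs (n : ℝ), _root_.sq_abs (m : ℝ)]
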